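/- arXiv:1812.07497 — 2 statements merged into one kernel-verified Lean document; each statement's English description precedes it below -/
import Mathlib

section
/- Let 0 < γ' ≤ γ < 1, let τ₁, τ₃ ∈ (1,2], and let η₁ be a real number with γ/τ₁ < η₁. Then for every integer n ≥ 1 and every real h > 0 with n^(−γ) ≤ h ≤ n^(−γ'), one has n^(η₁)·h^(1/τ₁) ≥ (n·h^(1/τ₃))^((η₁−γ/τ₁)/(1−γ'/τ₃)). -/
open Real

/-- Remark 5 of the paper: the reduced sample size `n^(η₁)·h^(1/τ₁)` is bounded below by
`(n·h^(1/τ₃))^((η₁−γ/τ₁)/(1−γ'/τ₃))` under `n^(−γ) ≤ h ≤ n^(−γ')`. -/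
theorem stmt_2 (γ γ' τ₁ τ₃ η₁ : ℝ)
    (hγ'0 : 0 < γ') (hγ'γ : γ' ≤ γ) (hγ1 : γ < 1)
    (hτ₁l : 1 < τ₁) (hτ₁u : τ₁ ≤ 2) (hτ₃l : 1 < τ₃) (hτ₃u : τ₃ ≤ 2)
    (hη₁ : γ / τ₁ < η₁)
    (n : ℕ) (hn : 1 ≤ n) (h : ℝ) (hh : 0 < h)
    (hlb : (n : ℝ) ^ (-γ) ≤ h) (hub : h ≤ (n : ℝ) ^ (-γ')) :
    ((n : ℝ) * h ^ (1 / τ₃)) ^ ((η₁ - γ / τ₁) / (1 - γ' / τ₃)) ≤ (n : ℝ) ^ η₁ * h ^ (1 / τ₁) := by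
  have hn1 : (1:ℝ) ≤ n := by exact_mod_cast hn
  have hn0 : (0:ℝ) < n := lt_of_lt_of_le one_pos hn1
  have hτ₃0 : (0:ℝ) < τ₃ := lt_trans one_pos hτ₃l
  have hτ₁0 : (0:ℝ) < τ₁ := lt_trans one_pos hτ₁l
  have hden : 0 < 1 - γ' / τ₃ := by
    have : γ' / τ₃ < 1 := by
      rw [div_lt_one hτ₃0]; linarith
    linarith
  have he : 0 ≤ (η₁ - γ / τ₁) / (1 - γ' / τ₃) :=
    div_nonneg (by linarith) hden.le
  have hb : (n:ℝ) * h ^ (1/τ₃) ≤ (n:ℝ) ^ (1 - γ'/τ₃) := by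
    have h1 : h ^ (1/τ₃) ≤ ((n:ℝ) ^ (-γ')) ^ (1/τ₃) :=
      Real.rpow_le_rpow hh.le hub (by positivity)
    have h2 : ((n:ℝ) ^ (-γ')) ^ (1/τ₃) = (n:ℝ) ^ (-(γ'/τ₃)) := by
      rw [← Real.rpow_mul hn0.le]; ring_nf
    calc (n:ℝ) * h ^ (1/τ₃) ≤ (n:ℝ) * (n:ℝ) ^ (-(γ'/τ₃)) := by
          rw [← h2]; exact mul_le_mul_of_nonneg_left h1 hn0.le
      _ = (n:ℝ) ^ (1 - γ'/τ₃) := by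
          rw [sub_eq_add_neg, Real.rpow_add hn0, Real.rpow_one]
  calc ((n : ℝ) * h ^ (1 / τ₃)) ^ ((η₁ - γ / τ₁) / (1 - γ' / τ₃))
      ≤ ((n:ℝ) ^ (1 - γ'/τ₃)) ^ ((η₁ - γ / τ₁) / (1 - γ' / τ₃)) :=
        Real.rpow_le_rpow (by positivity) hb he
    _ = (n:ℝ) ^ ((1 - γ'/τ₃) * ((η₁ - γ / τ₁) / (1 - γ' / τ₃))) := by
        rw [← Real.rpow_mul hn0.le]
    _ = (n:ℝ) ^ (η₁ - γ / τ₁) := by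
        rw [mul_div_cancel₀ _ hden.ne']
    _ = (n:ℝ) ^ η₁ * (n:ℝ) ^ (-(γ/τ₁)) := by
        rw [← Real.rpow_add hn0]; ring_nf
    _ ≤ (n:ℝ) ^ η₁ * h ^ (1/τ₁) := by
        have h1 : ((n:ℝ) ^ (-γ)) ^ (1/τ₁) ≤ h ^ (1/τ₁) :=
          Real.rpow_le_rpow (by positivity) hlb (by positivity)
        have h2 : ((n:ℝ) ^ (-γ)) ^ (1/τ₁) = (n:ℝ) ^ (-(γ/τ₁)) := by
          rw [← Real.rpow_mul hn0.le]; ring_nf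
        rw [← h2]
        exact mul_le_mul_of_nonneg_left h1 (by positivity)
end

section
/- Let 0 < γ' ≤ γ < 1 with additionally γ' < 1, and let η₂ be a real number with γ < η₂. Then for every integer n ≥ 1 and every real h > 0 with n^(−γ) ≤ h ≤ n^(−γ'), one has n^(η₂)·h ≥ (n·h)^((η₂−γ)/(1−γ')). -/
open Real

/-- Remark 5 of the paper: the reduced horizon `n^(η₂)·h` is bounded below by
`(n·h)^((η₂−γ)/(1−γ'))` under `n^(−γ) ≤ h ≤ n^(−γ')`. -/
theorem stmt_3 (γ γ' η₂ : ℝ)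
    (hγ'0 : 0 < γ') (hγ'γ : γ' ≤ γ) (hγ1 : γ < 1) (hγ'1 : γ' < 1)
    (hη₂ : γ < η₂)
    (n : ℕ) (hn : 1 ≤ n) (h : ℝ) (hh : 0 < h)
    (hlb : (n : ℝ) ^ (-γ) ≤ h) (hub : h ≤ (n : ℝ) ^ (-γ')) :
    ((n : ℝ) * h) ^ ((η₂ - γ) / (1 - γ')) ≤ (n : ℝ) ^ η₂ * h := by
  have hn1 : (1 : ℝ) ≤ (n : ℝ) := by exact_mod_cast hn
  have hn0 : (0 : ℝ) < (n : ℝ) := by linarith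
  have hα : 0 ≤ (η₂ - γ) / (1 - γ') := div_nonneg (by linarith) (by linarith)
  have hub' : (n : ℝ) * h ≤ (n : ℝ) ^ (1 - γ') := by
    calc (n : ℝ) * h ≤ (n : ℝ) * (n : ℝ) ^ (-γ') := by nlinarith
    _ = (n : ℝ) ^ (1 - γ') := by
        rw [Real.rpow_sub hn0, Real.rpow_one, Real.rpow_neg hn0.le]; ring
  have key : ((n : ℝ) * h) ^ ((η₂ - γ) / (1 - γ')) ≤ (n : ℝ) ^ (η₂ - γ) := by
    calc ((n : ℝ) * h) ^ ((η₂ - γ) / (1 - γ'))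
        ≤ ((n : ℝ) ^ (1 - γ')) ^ ((η₂ - γ) / (1 - γ')) :=
          Real.rpow_le_rpow (by positivity) hub' hα
      _ = (n : ℝ) ^ (η₂ - γ) := by
          rw [← Real.rpow_mul hn0.le]
          congr 1
          rw [mul_comm, div_mul_cancel₀ _ (by linarith : (1:ℝ) - γ' ≠ 0)]
  calc ((n : ℝ) * h) ^ ((η₂ - γ) / (1 - γ')) ≤ (n : ℝ) ^ (η₂ - γ) := key
    _ = (n : ℝ) ^ η₂ * (n : ℝ) ^ (-γ) := by
        rw [← Real.rpow_add hn0]; ring_nf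
    _ ≤ (n : ℝ) ^ η₂ * h := by
        have : (0:ℝ) < (n:ℝ) ^ η₂ := Real.rpow_pos_of_pos hn0 _
        nlinarith
end
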